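/- Let μ > 0, L > 0, R > 0, and natural numbers n, p. Let κ : ℕ → ℝ, c : ℕ → ℝ, λ : ℕ → ℝ be such that κ_i > 0 and c_i > 0 for all i, and κ_i ≤ κ_{i+1} for all i with n ≤ i ≤ n+p+1. Assume that for every i with n ≤ i ≤ n+p+1 one has c_i·(κ_{i+1}/κ_i) < (L·κ_i)^μ·R^{−λ_i}. Then (L·κ_n)^{(1+μ)^{p+1}} > (c_{n+p+1}·R^{λ_{n+p+1}})^{1/μ} · ∏_{i=0}^{p} (c_{n+i}·R^{λ_{n+i}})^{(1+μ)^{p−i}}. -/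

import Mathlib

open scoped BigOperators

private lemma step_lemma (μ L R : ℝ) (hL : 0 < L) (hR : 0 < R)
    (κ c lam : ℕ → ℝ) (hκpos : ∀ i, 0 < κ i)
    (i : ℕ)
    (hb : c i * (κ (i + 1) / κ i) < (L * κ i) ^ μ * R ^ (-(lam i))) :
    c i * R ^ lam i * (L * κ (i + 1)) < (L * κ i) ^ (1 + μ) := by
  have hx : (0:ℝ) < L * κ i := mul_pos hL (hκpos i)
  have hRl : (0:ℝ) < R ^ lam i := Real.rpow_pos_of_pos hR _
  have hpos : (0:ℝ) < R ^ lam i * (L * κ i) := by positivity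
  have h1 := mul_lt_mul_of_pos_right hb hpos
  have hL1 : c i * (κ (i + 1) / κ i) * (R ^ lam i * (L * κ i)) =
      c i * R ^ lam i * (L * κ (i + 1)) := by
    have := (hκpos i).ne'
    field_simp
  have hR1 : (L * κ i) ^ μ * R ^ (-(lam i)) * (R ^ lam i * (L * κ i)) =
      (L * κ i) ^ (1 + μ) := by
    rw [Real.rpow_add hx, Real.rpow_one, Real.rpow_neg hR.le]
    field_simp
  rwa [hL1, hR1] at h1

private lemma ind_lemma (μ L R : ℝ) (hμ : 0 < μ) (hL : 0 < L) (hR : 0 < R)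
    (n p : ℕ) (κ c lam : ℕ → ℝ)
    (hκpos : ∀ i, 0 < κ i) (hcpos : ∀ i, 0 < c i)
    (hbad : ∀ i, n ≤ i → i ≤ n + p + 1 →
      c i * (κ (i + 1) / κ i) < (L * κ i) ^ μ * R ^ (-(lam i))) :
    ∀ k, k ≤ p →
      (∏ i ∈ Finset.range (k + 1), (c (n + i) * R ^ lam (n + i)) ^ ((1 + μ) ^ (k - i))) *
          (L * κ (n + k + 1)) < (L * κ n) ^ ((1 + μ) ^ (k + 1)) := by
  intro k hk
  induction k with
  | zero =>
      simp only [zero_add, Finset.prod_range_one, Nat.sub_self, pow_zero, Real.rpow_one,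
        pow_one, Nat.add_zero]
      exact step_lemma μ L R hL hR κ c lam hκpos n (hbad n le_rfl (by omega))
  | succ k ih =>
      have ih' := ih (by omega)
      have hμ1 : (0:ℝ) < 1 + μ := by linarith
      set P := ∏ i ∈ Finset.range (k + 1), (c (n + i) * R ^ lam (n + i)) ^ ((1 + μ) ^ (k - i))
        with hP
      have hPpos : 0 < P := by
        apply Finset.prod_pos
        intro i _
        exact Real.rpow_pos_of_pos (mul_pos (hcpos _) (Real.rpow_pos_of_pos hR _)) _
      have hxk : (0:ℝ) < L * κ (n + k + 1) := mul_pos hL (hκpos _)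
      have hraise := Real.rpow_lt_rpow (mul_pos hPpos hxk).le ih' hμ1
      have hstep := step_lemma μ L R hL hR κ c lam hκpos (n + k + 1)
        (hbad (n + k + 1) (by omega) (by omega))
      have hLκn : (0:ℝ) ≤ L * κ n := (mul_pos hL (hκpos n)).le
      have e1 : ((L * κ n) ^ ((1 + μ) ^ (k + 1))) ^ (1 + μ)
          = (L * κ n) ^ ((1 + μ) ^ (k + 2)) := by
        rw [← Real.rpow_mul hLκn, ← pow_succ]
      have e2 : (P * (L * κ (n + k + 1))) ^ (1 + μ)
          = P ^ (1 + μ) * (L * κ (n + k + 1)) ^ (1 + μ) :=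
        Real.mul_rpow hPpos.le hxk.le
      have e3 : P ^ (1 + μ)
          = ∏ i ∈ Finset.range (k + 1),
              (c (n + i) * R ^ lam (n + i)) ^ ((1 + μ) ^ (k + 1 - i)) := by
        rw [hP, ← Real.finset_prod_rpow _ _
          (fun i _ => (Real.rpow_pos_of_pos
            (mul_pos (hcpos _) (Real.rpow_pos_of_pos hR _)) _).le)]
        refine Finset.prod_congr rfl fun i hi => ?_
        have hi' : i ≤ k := Nat.lt_succ_iff.mp (Finset.mem_range.mp hi)
        rw [← Real.rpow_mul (mul_pos (hcpos _) (Real.rpow_pos_of_pos hR _)).le,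
          ← pow_succ]
        congr 2
        omega
      rw [e1, e2, e3] at hraise
      have hPμpos : 0 < ∏ i ∈ Finset.range (k + 1),
          (c (n + i) * R ^ lam (n + i)) ^ ((1 + μ) ^ (k + 1 - i)) := by
        apply Finset.prod_pos
        intro i _
        exact Real.rpow_pos_of_pos (mul_pos (hcpos _) (Real.rpow_pos_of_pos hR _)) _
      have hcomb := lt_trans (mul_lt_mul_of_pos_left hstep hPμpos) hraise
      calc (∏ i ∈ Finset.range (k + 1 + 1),
              (c (n + i) * R ^ lam (n + i)) ^ ((1 + μ) ^ (k + 1 - i))) *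
            (L * κ (n + (k + 1) + 1))
          = (∏ i ∈ Finset.range (k + 1),
              (c (n + i) * R ^ lam (n + i)) ^ ((1 + μ) ^ (k + 1 - i))) *
            (c (n + k + 1) * R ^ lam (n + k + 1) * (L * κ (n + k + 1 + 1))) := by
            rw [Finset.prod_range_succ, Nat.sub_self, pow_zero, Real.rpow_one]
            have : n + (k + 1) = n + k + 1 := by omega
            rw [this]
            ring
        _ < (L * κ n) ^ ((1 + μ) ^ (k + 2)) := hcomb

/-- the lower bound on `L κ_n` on the intersection of bad intervals:
if the bad-interval inequality `c_i (κ_{i+1}/κ_i) < (L κ_i)^μ R^{-λ_i}` holds for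
all `i` with `n ≤ i ≤ n+p+1`, then
`(L κ_n)^{(1+μ)^{p+1}} > (c_{n+p+1} R^{λ_{n+p+1}})^{1/μ} ∏_{i=0}^{p} (c_{n+i} R^{λ_{n+i}})^{(1+μ)^{p-i}}`. -/
theorem bad_interval_intersection_lower_bound
    (μ L R : ℝ) (hμ : 0 < μ) (hL : 0 < L) (hR : 0 < R)
    (n p : ℕ) (κ c lam : ℕ → ℝ)
    (hκpos : ∀ i, 0 < κ i) (hcpos : ∀ i, 0 < c i)
    (hmono : ∀ i, n ≤ i → i ≤ n + p + 1 → κ i ≤ κ (i + 1))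
    (hbad : ∀ i, n ≤ i → i ≤ n + p + 1 →
      c i * (κ (i + 1) / κ i) < (L * κ i) ^ μ * R ^ (-(lam i))) :
    (L * κ n) ^ ((1 + μ) ^ (p + 1)) >
      (c (n + p + 1) * R ^ lam (n + p + 1)) ^ (1 / μ) *
        ∏ i ∈ Finset.range (p + 1), (c (n + i) * R ^ lam (n + i)) ^ ((1 + μ) ^ (p - i)) := by
  have hind := ind_lemma μ L R hμ hL hR n p κ c lam hκpos hcpos hbad p le_rfl
  -- last bad interval gives (c R^λ)^(1/μ) < L κ_{n+p+1}
  set m := n + p + 1 with hm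
  have hxm : (0:ℝ) < L * κ m := mul_pos hL (hκpos m)
  have hcm : (0:ℝ) < c m := hcpos m
  have hratio : (1:ℝ) ≤ κ (m + 1) / κ m :=
    (one_le_div (hκpos m)).mpr (hmono m (by omega) le_rfl)
  have h1 : c m < (L * κ m) ^ μ * R ^ (-(lam m)) :=
    lt_of_le_of_lt (le_mul_of_one_le_right hcm.le hratio) (hbad m (by omega) le_rfl)
  have hRl : (0:ℝ) < R ^ lam m := Real.rpow_pos_of_pos hR _
  have h2 : c m * R ^ lam m < (L * κ m) ^ μ := by
    have := mul_lt_mul_of_pos_right h1 hRl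
    rwa [mul_assoc, ← Real.rpow_add hR, neg_add_cancel, Real.rpow_zero, mul_one] at this
  have h3 : (c m * R ^ lam m) ^ (1 / μ) < L * κ m := by
    have := Real.rpow_lt_rpow (by positivity) h2 (by positivity : (0:ℝ) < 1 / μ)
    rwa [← Real.rpow_mul hxm.le, mul_one_div, div_self hμ.ne', Real.rpow_one] at this
  have hprodpos : 0 < ∏ i ∈ Finset.range (p + 1),
      (c (n + i) * R ^ lam (n + i)) ^ ((1 + μ) ^ (p - i)) := by
    apply Finset.prod_pos
    intro i _
    exact Real.rpow_pos_of_pos (mul_pos (hcpos _) (Real.rpow_pos_of_pos hR _)) _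
  calc (c m * R ^ lam m) ^ (1 / μ) *
        ∏ i ∈ Finset.range (p + 1), (c (n + i) * R ^ lam (n + i)) ^ ((1 + μ) ^ (p - i))
      < (L * κ m) *
        ∏ i ∈ Finset.range (p + 1), (c (n + i) * R ^ lam (n + i)) ^ ((1 + μ) ^ (p - i)) :=
        mul_lt_mul_of_pos_right h3 hprodpos
    _ = (∏ i ∈ Finset.range (p + 1), (c (n + i) * R ^ lam (n + i)) ^ ((1 + μ) ^ (p - i))) *
        (L * κ (n + p + 1)) := by rw [mul_comm, hm]
    _ < (L * κ n) ^ ((1 + μ) ^ (p + 1)) := hind
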